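/- (Theorem 1, multi-step bound) Assume the stability bounds (NE1) and (NE2) with constants 0 < λ_min ≤ λ_max, set κ = λ_max/λ_min, and let 0 < ξ < 2/λ_max. Let u ∈ V, let p_0, p_1, … be integers with 1 ≤ p_s ≤ n+1, and let I_0, I_1, … be independent random subsets of {0,1,…,n}, where I_s is uniform among subsets of size p_s. Define the random error sequence by e^{(0)} = u and e^{(s+1)} = e^{(s)} − ξ Σ_{i∈I_s} ω_i R_i T_i e^{(s)}. Then for every m ≥ 1, E(‖e^{(m)}‖²) ≤ ∏_{s=0}^{m−1} (1 − λ_max ξ (2 − λ_max ξ) p_s / (κ (n+1))) · ‖u‖². -/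

import Mathlib

open scoped RealInnerProductSpace

/-- The stochastic subspace correction error sequence (recursion (Rec0)):
`e⁽⁰⁾ = u`, `e⁽ˢ⁺¹⁾ = e⁽ˢ⁾ − ξ ∑_{i ∈ Iₛ} ω_i R_i T_i e⁽ˢ⁾`, where `T_i = R_i^*`. -/
noncomputable def errSeq
    {V : Type*} [NormedAddCommGroup V] [InnerProductSpace ℝ V] [CompleteSpace V]
    {n : ℕ} {W : Fin (n + 1) → Type*}
    [∀ i, NormedAddCommGroup (W i)] [∀ i, InnerProductSpace ℝ (W i)]
    [∀ i, CompleteSpace (W i)]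
    (R : ∀ i, W i →L[ℝ] V) (ω : Fin (n + 1) → ℝ) (ξ : ℝ) (u : V)
    (Is : ℕ → Finset (Fin (n + 1))) : ℕ → V
  | 0 => u
  | s + 1 =>
      errSeq R ω ξ u Is s -
        ξ • ∑ i ∈ Is s,
          ω i • R i ((ContinuousLinearMap.adjoint (R i)) (errSeq R ω ξ u Is s))

open Finset

section ErrSeq

variable {V : Type*} [NormedAddCommGroup V] [InnerProductSpace ℝ V] [CompleteSpace V]
    {n : ℕ} {W : Fin (n + 1) → Type*}
    [∀ i, NormedAddCommGroup (W i)] [∀ i, InnerProductSpace ℝ (W i)]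
    [∀ i, CompleteSpace (W i)]
    (R : ∀ i, W i →L[ℝ] V) (ω : Fin (n + 1) → ℝ) (ξ : ℝ)

lemma errSeq_congr (u : V) (Is Is' : ℕ → Finset (Fin (n + 1))) :
    ∀ (m : ℕ), (∀ s < m, Is s = Is' s) → errSeq R ω ξ u Is m = errSeq R ω ξ u Is' m
  | 0, _ => rfl
  | m + 1, h => by
      have ih := errSeq_congr u Is Is' m fun s hs => h s (Nat.lt_succ_of_lt hs)
      show errSeq R ω ξ u Is m - _ = errSeq R ω ξ u Is' m - _
      rw [ih, h m (Nat.lt_succ_self m)]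

lemma errSeq_shift (u : V) (Is : ℕ → Finset (Fin (n + 1))) :
    ∀ (m : ℕ), errSeq R ω ξ u Is (m + 1)
      = errSeq R ω ξ
          (u - ξ • ∑ i ∈ Is 0, ω i • R i ((ContinuousLinearMap.adjoint (R i)) u))
          (fun s => Is (s + 1)) m
  | 0 => rfl
  | m + 1 => by
      show errSeq R ω ξ u Is (m + 1) - _ = errSeq R ω ξ _ _ m - _
      rw [errSeq_shift u Is m]

end ErrSeq


section AuxCount

variable {α : Type*} [DecidableEq α] [Fintype α]

lemma count_mem_powersetCard (p : ℕ) (hp1 : 1 ≤ p) (i : α) :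
    ({K ∈ powersetCard p (univ : Finset α) | i ∈ K}).card
      = (Fintype.card α - 1).choose (p - 1) := by
  have : ({K ∈ powersetCard p (univ : Finset α) | i ∈ K}).card
      = (powersetCard (p - 1) ((univ : Finset α).erase i)).card := by
    refine Finset.card_nbij' (fun K => K.erase i) (fun L => insert i L) ?_ ?_ ?_ ?_
    · intro K hK
      simp only [Finset.mem_coe, mem_filter, mem_powersetCard] at hK
      simp only [Finset.mem_coe, mem_powersetCard]
      exact ⟨Finset.erase_subset_erase i hK.1.1,
        by rw [Finset.card_erase_of_mem hK.2, hK.1.2]⟩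
    · intro L hL
      simp only [Finset.mem_coe, mem_powersetCard] at hL
      have hiL : i ∉ L := fun h => (Finset.mem_erase.mp (hL.1 h)).1 rfl
      simp only [Finset.mem_coe, mem_filter, mem_powersetCard]
      refine ⟨⟨Finset.subset_univ _, ?_⟩, Finset.mem_insert_self i L⟩
      rw [Finset.card_insert_of_notMem hiL, hL.2]
      omega
    · intro K hK
      simp only [Finset.mem_coe, mem_filter] at hK
      exact Finset.insert_erase hK.2
    · intro L hL
      simp only [Finset.mem_coe, mem_powersetCard] at hL
      have hiL : i ∉ L := fun h => (Finset.mem_erase.mp (hL.1 h)).1 rfl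
      exact Finset.erase_insert hiL
  rw [this, Finset.card_powersetCard, Finset.card_erase_of_mem (Finset.mem_univ i),
    Finset.card_univ]

lemma sum_powersetCard_sum (p : ℕ) (hp1 : 1 ≤ p) (f : α → ℝ) :
    ∑ K ∈ powersetCard p (univ : Finset α), ∑ i ∈ K, f i
      = ((Fintype.card α - 1).choose (p - 1) : ℝ) * ∑ i, f i := by
  calc ∑ K ∈ powersetCard p (univ : Finset α), ∑ i ∈ K, f i
      = ∑ K ∈ powersetCard p (univ : Finset α), ∑ i : α, if i ∈ K then f i else 0 := by
        refine Finset.sum_congr rfl fun K _ => ?_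
        rw [← Finset.sum_filter]
        congr 1
        ext x
        simp
    _ = ∑ i : α, ∑ K ∈ powersetCard p (univ : Finset α), if i ∈ K then f i else 0 :=
        Finset.sum_comm
    _ = ∑ i : α, ((Fintype.card α - 1).choose (p - 1) : ℝ) * f i := by
        refine Finset.sum_congr rfl fun i _ => ?_
        rw [← Finset.sum_filter, Finset.sum_const, count_mem_powersetCard p hp1 i,
          nsmul_eq_mul]
    _ = _ := by rw [← Finset.mul_sum]

end AuxCount

lemma sum_piFinset_cons {β : Type*} [DecidableEq β] {m : ℕ} (F : Fin (m + 1) → Finset β)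
    (g : (Fin (m + 1) → β) → ℝ) :
    ∑ J ∈ Fintype.piFinset F, g J
      = ∑ K ∈ F 0, ∑ J' ∈ Fintype.piFinset (fun s : Fin m => F s.succ), g (Fin.cons K J') := by
  rw [← Finset.sum_product']
  refine Finset.sum_nbij' (fun J => (J 0, Fin.tail J)) (fun P => Fin.cons P.1 P.2) ?_ ?_ ?_ ?_ ?_
  · intro J hJ
    rw [Fintype.mem_piFinset] at hJ
    refine Finset.mem_product.mpr ⟨hJ 0, Fintype.mem_piFinset.mpr fun s => hJ s.succ⟩
  · intro P hP
    rw [Finset.mem_product] at hP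
    rw [Fintype.mem_piFinset]
    intro s
    refine Fin.cases ?_ ?_ s
    · simpa using hP.1
    · intro t
      simpa using Fintype.mem_piFinset.mp hP.2 t
  · intro J _
    exact Fin.cons_self_tail J
  · intro P _
    simp
  · intro J _
    rw [Fin.cons_self_tail J]


section OneStep

variable {V : Type*} [NormedAddCommGroup V] [InnerProductSpace ℝ V] [CompleteSpace V]
    {n : ℕ} {W : Fin (n + 1) → Type*}
    [∀ i, NormedAddCommGroup (W i)] [∀ i, InnerProductSpace ℝ (W i)]
    [∀ i, CompleteSpace (W i)]

lemma one_step_bound (R : ∀ i, W i →L[ℝ] V) (ω : Fin (n + 1) → ℝ)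
    (lmin lmax : ℝ) (hlmin : 0 < lmin) (hminmax : lmin ≤ lmax)
    (hNE1 : ∀ v : V,
      lmin * ‖v‖ ^ 2 ≤ ⟪(∑ i, ω i • R i ((ContinuousLinearMap.adjoint (R i)) v)), v⟫)
    (hNE2 : ∀ w : ∀ i, W i,
      ‖∑ i, ω i • R i (w i)‖ ^ 2 ≤ lmax * ∑ i, ω i * ‖w i‖ ^ 2)
    (ξ : ℝ) (hξ0 : 0 < ξ) (hξ2 : ξ < 2 / lmax)
    (e : V) (q : ℕ) (hq1 : 1 ≤ q) (hq2 : q ≤ n + 1) :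
    ∑ K ∈ powersetCard q (univ : Finset (Fin (n + 1))),
        ‖e - ξ • ∑ i ∈ K, ω i • R i ((ContinuousLinearMap.adjoint (R i)) e)‖ ^ 2
      ≤ ((n + 1).choose q : ℝ) *
          (1 - lmax * ξ * (2 - lmax * ξ) * (q : ℝ) / ((lmax / lmin) * (n + 1))) * ‖e‖ ^ 2 := by
  have hlmax : 0 < lmax := lt_of_lt_of_le hlmin hminmax
  have hξmax : lmax * ξ < 2 := by
    have := (lt_div_iff₀ hlmax).mp hξ2
    linarith
  set T : ∀ i, V → W i := fun i v => (ContinuousLinearMap.adjoint (R i)) v with hT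
  set f : Fin (n + 1) → ℝ := fun i => ω i * ‖T i e‖ ^ 2 with hf
  -- per-subset bound
  have hstep : ∀ K : Finset (Fin (n + 1)),
      ‖e - ξ • ∑ i ∈ K, ω i • R i (T i e)‖ ^ 2
        ≤ ‖e‖ ^ 2 - ξ * (2 - lmax * ξ) * ∑ i ∈ K, f i := by
    intro K
    have hinner : ⟪e, ∑ i ∈ K, ω i • R i (T i e)⟫ = ∑ i ∈ K, f i := by
      rw [inner_sum]
      refine Finset.sum_congr rfl fun i _ => ?_
      rw [real_inner_smul_right, ← ContinuousLinearMap.adjoint_inner_left,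
        real_inner_self_eq_norm_sq]
    have hS2 : ‖∑ i ∈ K, ω i • R i (T i e)‖ ^ 2 ≤ lmax * ∑ i ∈ K, f i := by
      have h1 : (∑ i, ω i • R i (if i ∈ K then T i e else 0))
          = ∑ i ∈ K, ω i • R i (T i e) := by
        calc (∑ i, ω i • R i (if i ∈ K then T i e else 0))
            = ∑ i, if i ∈ K then ω i • R i (T i e) else 0 :=
              Finset.sum_congr rfl fun i _ => by split <;> simp
          _ = ∑ i ∈ univ ∩ K, ω i • R i (T i e) := Finset.sum_ite_mem _ _ _
          _ = _ := by rw [Finset.univ_inter]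
      have h2 : (∑ i, ω i * ‖if i ∈ K then T i e else 0‖ ^ 2) = ∑ i ∈ K, f i := by
        calc (∑ i, ω i * ‖if i ∈ K then T i e else 0‖ ^ 2)
            = ∑ i, if i ∈ K then f i else 0 :=
              Finset.sum_congr rfl fun i _ => by split <;> simp [hf]
          _ = ∑ i ∈ univ ∩ K, f i := Finset.sum_ite_mem _ _ _
          _ = _ := by rw [Finset.univ_inter]
      have := hNE2 (fun i => if i ∈ K then T i e else 0)
      rwa [h1, h2] at this
    have hexp : ‖e - ξ • ∑ i ∈ K, ω i • R i (T i e)‖ ^ 2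
        = ‖e‖ ^ 2 - 2 * (ξ * ∑ i ∈ K, f i) + ξ ^ 2 * ‖∑ i ∈ K, ω i • R i (T i e)‖ ^ 2 := by
      rw [norm_sub_sq_real, real_inner_smul_right, hinner, norm_smul, mul_pow, Real.norm_eq_abs, sq_abs]
    rw [hexp]
    nlinarith [sq_nonneg ξ, mul_le_mul_of_nonneg_left hS2 (sq_nonneg ξ)]
  -- sum the per-subset bounds
  have hSig : lmin * ‖e‖ ^ 2 ≤ ∑ i, f i := by
    have h3 : ⟪(∑ i, ω i • R i (T i e)), e⟫ = ∑ i, f i := by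
      rw [sum_inner]
      refine Finset.sum_congr rfl fun i _ => ?_
      rw [real_inner_smul_left, ← ContinuousLinearMap.adjoint_inner_right,
        real_inner_self_eq_norm_sq]
    have := hNE1 e
    rwa [h3] at this
  have hcard : (powersetCard q (univ : Finset (Fin (n + 1)))).card = (n + 1).choose q := by
    rw [Finset.card_powersetCard, Finset.card_univ, Fintype.card_fin]
  have hsum : ∑ K ∈ powersetCard q (univ : Finset (Fin (n + 1))),
      ‖e - ξ • ∑ i ∈ K, ω i • R i (T i e)‖ ^ 2
      ≤ ((n + 1).choose q : ℝ) * ‖e‖ ^ 2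
        - ξ * (2 - lmax * ξ) * ((n.choose (q - 1) : ℝ) * ∑ i, f i) := by
    calc ∑ K ∈ powersetCard q (univ : Finset (Fin (n + 1))),
        ‖e - ξ • ∑ i ∈ K, ω i • R i (T i e)‖ ^ 2
        ≤ ∑ K ∈ powersetCard q (univ : Finset (Fin (n + 1))),
            (‖e‖ ^ 2 - ξ * (2 - lmax * ξ) * ∑ i ∈ K, f i) :=
          Finset.sum_le_sum fun K _ => hstep K
      _ = ((n + 1).choose q : ℝ) * ‖e‖ ^ 2
          - ξ * (2 - lmax * ξ) * ∑ K ∈ powersetCard q (univ : Finset (Fin (n + 1))),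
              ∑ i ∈ K, f i := by
          rw [Finset.sum_sub_distrib, Finset.sum_const, hcard, nsmul_eq_mul, ← Finset.mul_sum]
      _ = _ := by
          rw [sum_powersetCard_sum q hq1 f]
          congr 2
          simp [Fintype.card_fin]
  have hcoeff : 0 ≤ ξ * (2 - lmax * ξ) := by nlinarith
  have hchoose : ((n + 1).choose q : ℝ) * q = ((n : ℝ) + 1) * (n.choose (q - 1)) := by
    obtain ⟨q', rfl⟩ : ∃ q', q = q' + 1 := ⟨q - 1, by omega⟩
    have h := Nat.add_one_mul_choose_eq n q'
    have h2 := congrArg (fun x : ℕ => (x : ℝ)) h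
    push_cast at h2
    simp only [Nat.add_sub_cancel]
    push_cast
    linarith
  have hfinal : ((n + 1).choose q : ℝ) * ‖e‖ ^ 2
      - ξ * (2 - lmax * ξ) * ((n.choose (q - 1) : ℝ) * (lmin * ‖e‖ ^ 2))
      = ((n + 1).choose q : ℝ) *
          (1 - lmax * ξ * (2 - lmax * ξ) * (q : ℝ) / ((lmax / lmin) * (n + 1))) * ‖e‖ ^ 2 := by
    have key : ((n + 1).choose q : ℝ) *
        (lmax * ξ * (2 - lmax * ξ) * (q : ℝ) / ((lmax / lmin) * (n + 1)))
        = ξ * (2 - lmax * ξ) * (n.choose (q - 1) : ℝ) * lmin := by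
      have hn1 : ((n : ℝ) + 1) ≠ 0 := by positivity
      have hlmin0 : lmin ≠ 0 := ne_of_gt hlmin
      have hlmax0 : lmax ≠ 0 := ne_of_gt hlmax
      field_simp
      linear_combination (2 - lmax * ξ) * hchoose
    linear_combination ‖e‖ ^ 2 * key
  calc ∑ K ∈ powersetCard q (univ : Finset (Fin (n + 1))),
        ‖e - ξ • ∑ i ∈ K, ω i • R i ((ContinuousLinearMap.adjoint (R i)) e)‖ ^ 2
      ≤ ((n + 1).choose q : ℝ) * ‖e‖ ^ 2
        - ξ * (2 - lmax * ξ) * ((n.choose (q - 1) : ℝ) * ∑ i, f i) := hsum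
    _ ≤ ((n + 1).choose q : ℝ) * ‖e‖ ^ 2
        - ξ * (2 - lmax * ξ) * ((n.choose (q - 1) : ℝ) * (lmin * ‖e‖ ^ 2)) := by
        have : (n.choose (q - 1) : ℝ) * (lmin * ‖e‖ ^ 2) ≤ (n.choose (q - 1) : ℝ) * ∑ i, f i :=
          mul_le_mul_of_nonneg_left hSig (by positivity)
        nlinarith [mul_le_mul_of_nonneg_left this hcoeff]
    _ = _ := hfinal

end OneStep

section Main

variable {V : Type*} [NormedAddCommGroup V] [InnerProductSpace ℝ V] [CompleteSpace V]
    {n : ℕ} {W : Fin (n + 1) → Type*}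
    [∀ i, NormedAddCommGroup (W i)] [∀ i, InnerProductSpace ℝ (W i)]
    [∀ i, CompleteSpace (W i)]

lemma c_nonneg (lmin lmax ξ : ℝ) (hlmin : 0 < lmin) (hminmax : lmin ≤ lmax)
    (hξ0 : 0 < ξ) (hξ2 : ξ < 2 / lmax) (q : ℕ) (hq2 : q ≤ n + 1) :
    0 ≤ 1 - lmax * ξ * (2 - lmax * ξ) * (q : ℝ) / ((lmax / lmin) * (n + 1)) := by
  have hlmax : 0 < lmax := lt_of_lt_of_le hlmin hminmax
  have hξmax : lmax * ξ < 2 := by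
    have := (lt_div_iff₀ hlmax).mp hξ2
    linarith
  have h1 : lmax * ξ * (2 - lmax * ξ) ≤ 1 := by nlinarith [sq_nonneg (1 - lmax * ξ)]
  have h2 : 0 ≤ lmax * ξ * (2 - lmax * ξ) :=
    mul_nonneg (le_of_lt (mul_pos hlmax hξ0)) (by linarith)
  have hq : (q : ℝ) ≤ (n : ℝ) + 1 := by exact_mod_cast hq2
  have hden : 0 < (lmax / lmin) * ((n : ℝ) + 1) := by positivity
  have hk : (1 : ℝ) ≤ lmax / lmin := (one_le_div hlmin).mpr hminmax
  have hnum : lmax * ξ * (2 - lmax * ξ) * (q : ℝ) ≤ (lmax / lmin) * ((n : ℝ) + 1) := by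
    have hq0 : (0 : ℝ) ≤ q := Nat.cast_nonneg q
    have : lmax * ξ * (2 - lmax * ξ) * (q : ℝ) ≤ 1 * (q : ℝ) :=
      mul_le_mul_of_nonneg_right h1 hq0
    nlinarith
  have := div_le_one_of_le₀ hnum (le_of_lt hden)
  linarith

lemma main_aux (R : ∀ i, W i →L[ℝ] V) (ω : Fin (n + 1) → ℝ)
    (lmin lmax : ℝ) (hlmin : 0 < lmin) (hminmax : lmin ≤ lmax)
    (hNE1 : ∀ v : V,
      lmin * ‖v‖ ^ 2 ≤ ⟪(∑ i, ω i • R i ((ContinuousLinearMap.adjoint (R i)) v)), v⟫)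
    (hNE2 : ∀ w : ∀ i, W i,
      ‖∑ i, ω i • R i (w i)‖ ^ 2 ≤ lmax * ∑ i, ω i * ‖w i‖ ^ 2)
    (ξ : ℝ) (hξ0 : 0 < ξ) (hξ2 : ξ < 2 / lmax) :
    ∀ (m : ℕ) (u : V) (p : ℕ → ℕ), (∀ s, 1 ≤ p s ∧ p s ≤ n + 1) →
      ∑ J ∈ Fintype.piFinset
          (fun s : Fin m => powersetCard (p s.val) (univ : Finset (Fin (n + 1)))),
        ‖errSeq R ω ξ u (fun s => if h : s < m then J ⟨s, h⟩ else ∅) m‖ ^ 2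
      ≤ (∏ s ∈ range m, (((n + 1).choose (p s) : ℝ) *
          (1 - lmax * ξ * (2 - lmax * ξ) * (p s : ℝ) / ((lmax / lmin) * (n + 1))))) *
          ‖u‖ ^ 2 := by
  intro m
  induction m with
  | zero =>
    intro u p hp
    simp [errSeq, Fintype.piFinset_of_isEmpty]
  | succ m ih =>
    intro u p hp
    rw [sum_piFinset_cons (fun s : Fin (m + 1) => powersetCard (p s.val) univ)]
    have hterm : ∀ (K : Finset (Fin (n + 1))) (J' : Fin m → Finset (Fin (n + 1))),
        errSeq R ω ξ u
            (fun s => if h : s < m + 1 then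
              (Fin.cons K J' : Fin (m + 1) → Finset (Fin (n + 1))) ⟨s, h⟩ else ∅) (m + 1)
          = errSeq R ω ξ
              (u - ξ • ∑ i ∈ K, ω i • R i ((ContinuousLinearMap.adjoint (R i)) u))
              (fun s => if h : s < m then J' ⟨s, h⟩ else ∅) m := by
      intro K J'
      rw [errSeq_shift]
      have h0 : (if h : 0 < m + 1 then
          (Fin.cons K J' : Fin (m + 1) → Finset (Fin (n + 1))) ⟨0, h⟩ else ∅) = K := by
        rw [dif_pos (Nat.succ_pos m), Fin.mk_zero, Fin.cons_zero]
      rw [h0]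
      apply errSeq_congr
      intro s hs
      rw [dif_pos (Nat.succ_lt_succ hs), dif_pos hs,
        show (⟨s + 1, Nat.succ_lt_succ hs⟩ : Fin (m + 1)) = Fin.succ ⟨s, hs⟩ from rfl,
        Fin.cons_succ]
    have hPm : (0 : ℝ) ≤ ∏ s ∈ range m, (((n + 1).choose (p (s + 1)) : ℝ) *
        (1 - lmax * ξ * (2 - lmax * ξ) * (p (s + 1) : ℝ) / ((lmax / lmin) * (n + 1)))) := by
      refine Finset.prod_nonneg fun s _ => mul_nonneg (Nat.cast_nonneg _) ?_
      exact c_nonneg lmin lmax ξ hlmin hminmax hξ0 hξ2 _ (hp (s + 1)).2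
    calc ∑ K ∈ powersetCard (p (0 : Fin (m + 1)).val) (univ : Finset (Fin (n + 1))),
          ∑ J' ∈ Fintype.piFinset
            (fun s : Fin m => powersetCard (p (Fin.succ s).val) (univ : Finset (Fin (n + 1)))),
          ‖errSeq R ω ξ u
            (fun s => if h : s < m + 1 then
              (Fin.cons K J' : Fin (m + 1) → Finset (Fin (n + 1))) ⟨s, h⟩ else ∅) (m + 1)‖ ^ 2
        ≤ ∑ K ∈ powersetCard (p 0) (univ : Finset (Fin (n + 1))),
            ((∏ s ∈ range m, (((n + 1).choose (p (s + 1)) : ℝ) *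
              (1 - lmax * ξ * (2 - lmax * ξ) * (p (s + 1) : ℝ) / ((lmax / lmin) * (n + 1))))) *
              ‖u - ξ • ∑ i ∈ K, ω i • R i ((ContinuousLinearMap.adjoint (R i)) u)‖ ^ 2) := by
          refine Finset.sum_le_sum fun K _ => ?_
          have := ih (u - ξ • ∑ i ∈ K, ω i • R i ((ContinuousLinearMap.adjoint (R i)) u))
            (fun s => p (s + 1)) (fun s => hp (s + 1))
          calc ∑ J' ∈ Fintype.piFinset
                (fun s : Fin m => powersetCard (p (Fin.succ s).val) (univ : Finset (Fin (n + 1)))),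
              ‖errSeq R ω ξ u
                (fun s => if h : s < m + 1 then
                  (Fin.cons K J' : Fin (m + 1) → Finset (Fin (n + 1))) ⟨s, h⟩ else ∅)
                (m + 1)‖ ^ 2
              = ∑ J' ∈ Fintype.piFinset
                  (fun s : Fin m => powersetCard (p (s.val + 1)) (univ : Finset (Fin (n + 1)))),
                ‖errSeq R ω ξ
                  (u - ξ • ∑ i ∈ K, ω i • R i ((ContinuousLinearMap.adjoint (R i)) u))
                  (fun s => if h : s < m then J' ⟨s, h⟩ else ∅) m‖ ^ 2 := by
                refine Finset.sum_congr rfl fun J' _ => ?_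
                rw [hterm K J']
            _ ≤ _ := this
      _ = (∏ s ∈ range m, (((n + 1).choose (p (s + 1)) : ℝ) *
            (1 - lmax * ξ * (2 - lmax * ξ) * (p (s + 1) : ℝ) / ((lmax / lmin) * (n + 1))))) *
            ∑ K ∈ powersetCard (p 0) (univ : Finset (Fin (n + 1))),
              ‖u - ξ • ∑ i ∈ K, ω i • R i ((ContinuousLinearMap.adjoint (R i)) u)‖ ^ 2 := by
          rw [Finset.mul_sum]
      _ ≤ (∏ s ∈ range m, (((n + 1).choose (p (s + 1)) : ℝ) *
            (1 - lmax * ξ * (2 - lmax * ξ) * (p (s + 1) : ℝ) / ((lmax / lmin) * (n + 1))))) *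
            (((n + 1).choose (p 0) : ℝ) *
              (1 - lmax * ξ * (2 - lmax * ξ) * (p 0 : ℝ) / ((lmax / lmin) * (n + 1))) *
              ‖u‖ ^ 2) := by
          refine mul_le_mul_of_nonneg_left ?_ hPm
          exact one_step_bound R ω lmin lmax hlmin hminmax hNE1 hNE2 ξ hξ0 hξ2 u
            (p 0) (hp 0).1 (hp 0).2
      _ = (∏ s ∈ range (m + 1), (((n + 1).choose (p s) : ℝ) *
            (1 - lmax * ξ * (2 - lmax * ξ) * (p s : ℝ) / ((lmax / lmin) * (n + 1))))) *
            ‖u‖ ^ 2 := by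
          rw [Finset.prod_range_succ']
          ring

end Main


/-- **Theorem 1, multi-step bound.** Under (NE1), (NE2) with
`0 < λ_min ≤ λ_max`, `κ = λ_max/λ_min`, `0 < ξ < 2/λ_max`, and independent uniform random
subsets `Iₛ` of sizes `pₛ` of `{0,…,n}`, the error sequence of the stochastic subspace
correction method satisfies
`E(‖e⁽ᵐ⁾‖²) ≤ ∏_{s<m} (1 − λ_max ξ (2 − λ_max ξ) pₛ/(κ(n+1))) ‖u‖²`.
The expectation is the average over the product of the uniform distributions on the
collections of `pₛ`-element subsets, `s = 0,…,m−1`. -/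
theorem multi_step_expected_error_reduction
    {V : Type*} [NormedAddCommGroup V] [InnerProductSpace ℝ V] [CompleteSpace V]
    {n : ℕ} {W : Fin (n + 1) → Type*}
    [∀ i, NormedAddCommGroup (W i)] [∀ i, InnerProductSpace ℝ (W i)]
    [∀ i, CompleteSpace (W i)]
    (R : ∀ i, W i →L[ℝ] V) (ω : Fin (n + 1) → ℝ) (hω : ∀ i, 0 < ω i)
    (lmin lmax : ℝ) (hlmin : 0 < lmin) (hminmax : lmin ≤ lmax)
    (hNE1 : ∀ v : V,
      lmin * ‖v‖ ^ 2 ≤ ⟪(∑ i, ω i • R i ((ContinuousLinearMap.adjoint (R i)) v)), v⟫)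
    (hNE2 : ∀ w : ∀ i, W i,
      ‖∑ i, ω i • R i (w i)‖ ^ 2 ≤ lmax * ∑ i, ω i * ‖w i‖ ^ 2)
    (ξ : ℝ) (hξ0 : 0 < ξ) (hξ2 : ξ < 2 / lmax)
    (u : V) (p : ℕ → ℕ) (hp : ∀ s, 1 ≤ p s ∧ p s ≤ n + 1)
    (m : ℕ) (hm : 1 ≤ m) :
    (∏ s ∈ Finset.range m, ((n + 1).choose (p s) : ℝ))⁻¹ *
        ∑ J ∈ Fintype.piFinset
            (fun s : Fin m =>
              Finset.powersetCard (p s.val) (Finset.univ : Finset (Fin (n + 1)))),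
          ‖errSeq R ω ξ u (fun s => if h : s < m then J ⟨s, h⟩ else ∅) m‖ ^ 2 ≤
      (∏ s ∈ Finset.range m,
          (1 - lmax * ξ * (2 - lmax * ξ) * (p s : ℝ) / ((lmax / lmin) * (n + 1)))) *
        ‖u‖ ^ 2 := by
  have hC : 0 < ∏ s ∈ Finset.range m, ((n + 1).choose (p s) : ℝ) := by
    refine Finset.prod_pos fun s _ => ?_
    exact_mod_cast Nat.choose_pos (hp s).2
  rw [inv_mul_le_iff₀ hC]
  have := main_aux R ω lmin lmax hlmin hminmax hNE1 hNE2 ξ hξ0 hξ2 m u p hp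
  refine le_trans this (le_of_eq ?_)
  rw [Finset.prod_mul_distrib]
  ring
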